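/- arXiv:1402.2199 — 4 statements merged into one kernel-verified Lean document; each statement's English description precedes it below -/
import Mathlib

section
/- Let Z, X be Banach spaces, r > 0, and let η : [-r,0] → L(Z,X) be of bounded variation with total variation |η|([-r,0]). Define F : C([-r,0];Z) → X by Fφ = ∫_{-r}^0 dη(θ) φ(θ). Then for every T ≥ 0 and every continuous y : [-r,T] → Z, the function t ↦ F(y_t), where y_t(θ) = y(t+θ), satisfies ∫_0^T ‖F y_t‖_X² dt ≤ |η|([-r,0])² · ∫_{-r}^T ‖y(t)‖_Z² dt. -/
open MeasureTheory

/-- Cauchy–Schwarz for integrals of nonnegative functions against a finite measure. -/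
private lemma cs_aux {ν : Measure ℝ} [IsFiniteMeasure ν] {f : ℝ → ℝ}
    (hf0 : ∀ x, 0 ≤ f x) (hf2 : MemLp f 2 ν) :
    (∫ x, f x ∂ν) ^ 2 ≤ (ν Set.univ).toReal * ∫ x, f x ^ 2 ∂ν := by
  have hpq : Real.HolderConjugate 2 2 := Real.holderConjugate_iff.mpr ⟨one_lt_two, by norm_num⟩
  have hf2' : MemLp f (ENNReal.ofReal 2) ν := by
    simpa [ENNReal.ofReal_ofNat] using hf2
  have hg : MemLp (fun _ : ℝ => (1 : ℝ)) (ENNReal.ofReal 2) ν := memLp_const 1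
  have h := integral_mul_le_Lp_mul_Lq_of_nonneg hpq (Filter.Eventually.of_forall hf0)
    (Filter.Eventually.of_forall fun _ => zero_le_one) hf2' hg
  simp only [mul_one, one_pow, Real.one_rpow, Real.rpow_two, integral_const, smul_eq_mul] at h
  set A : ℝ := ∫ x, f x ^ 2 ∂ν with hA
  set B : ℝ := (ν Set.univ).toReal with hB
  have hA0 : 0 ≤ A := integral_nonneg fun x => sq_nonneg _
  have hB0 : 0 ≤ B := ENNReal.toReal_nonneg
  have h2 : (A ^ (1 / (2:ℝ)) * B ^ (1 / (2:ℝ))) ^ 2 = A * B := by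
    rw [mul_pow, ← Real.rpow_natCast (A ^ (1 / (2:ℝ))) 2,
      ← Real.rpow_natCast (B ^ (1 / (2:ℝ))) 2, ← Real.rpow_mul hA0, ← Real.rpow_mul hB0]
    norm_num
  calc (∫ x, f x ∂ν) ^ 2 ≤ (A ^ (1 / (2:ℝ)) * B ^ (1 / (2:ℝ))) ^ 2 :=
        pow_le_pow_left₀ (integral_nonneg hf0) h 2
    _ = A * B := h2
    _ = B * A := mul_comm _ _

/-- estimate for the delay operator given by a Stieltjes measure
(abstracted via its total variation measure `μ`). -/
theorem stmt0 {Z X : Type*} [NormedAddCommGroup Z] [NormedSpace ℝ Z]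
    [NormedAddCommGroup X] [NormedSpace ℝ X]
    (r : ℝ) (hr : 0 < r) (μ : Measure ℝ) [IsFiniteMeasure μ]
    (F : (ℝ → Z) → X)
    (hF : ∀ φ : ℝ → Z, ContinuousOn φ (Set.Icc (-r) 0) →
      ‖F φ‖ ≤ ∫ θ in Set.Icc (-r) 0, ‖φ θ‖ ∂μ)
    (T : ℝ) (hT : 0 ≤ T) (y : ℝ → Z) (hy : ContinuousOn y (Set.Icc (-r) T)) :
    ∫ t in Set.Icc (0:ℝ) T, ‖F (fun θ => y (t + θ))‖ ^ 2
      ≤ (μ (Set.Icc (-r) 0)).toReal ^ 2 * ∫ t in Set.Icc (-r) T, ‖y t‖ ^ 2 := by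
  have ha : -r ≤ T := le_trans (by linarith) hT
  have hs : MeasurableSet (Set.Icc (-r) (0:ℝ)) := measurableSet_Icc
  set g : ℝ → Z := Set.IccExtend ha ((Set.Icc (-r) T).restrict y) with hgdef
  have hgc : Continuous g := hy.restrict.Icc_extend'
  have hgy : ∀ x ∈ Set.Icc (-r) T, g x = y x := fun x hx => Set.IccExtend_of_mem ha _ hx
  obtain ⟨C, hC⟩ :=
    (isCompact_Icc : IsCompact (Set.Icc (-r) T)).exists_bound_of_continuousOn hgc.continuousOn
  have hC0 : 0 ≤ C := le_trans (norm_nonneg _) (hC (-r) (Set.left_mem_Icc.mpr ha))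
  set c : ℝ := (μ (Set.Icc (-r) 0)).toReal with hcdef
  have hc0 : 0 ≤ c := ENNReal.toReal_nonneg
  set K : ℝ := ∫ x in Set.Icc (-r) T, ‖g x‖ ^ 2 with hKdef
  have hgK : IntegrableOn (fun x => ‖g x‖ ^ 2) (Set.Icc (-r) T) :=
    ((hgc.norm.pow 2).continuousOn).integrableOn_compact isCompact_Icc
  have hmem : ∀ t ∈ Set.Icc (0:ℝ) T, ∀ θ ∈ Set.Icc (-r) (0:ℝ), t + θ ∈ Set.Icc (-r) T := by
    intro t ht θ hθ
    exact ⟨by linarith [ht.1, hθ.1], by linarith [ht.2, hθ.2]⟩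
  -- pointwise Cauchy–Schwarz bound
  have hpt : ∀ t ∈ Set.Icc (0:ℝ) T,
      ‖F (fun θ => y (t + θ))‖ ^ 2 ≤ c * ∫ θ in Set.Icc (-r) 0, ‖g (t + θ)‖ ^ 2 ∂μ := by
    intro t ht
    have hcont : ContinuousOn (fun θ => y (t + θ)) (Set.Icc (-r) 0) := by
      apply hy.comp (continuous_const.add continuous_id).continuousOn
      intro θ hθ; exact hmem t ht θ hθ
    have h1 := hF _ hcont
    have h2 : ∫ θ in Set.Icc (-r) 0, ‖y (t + θ)‖ ∂μ
        = ∫ θ in Set.Icc (-r) 0, ‖g (t + θ)‖ ∂μ :=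
      setIntegral_congr_fun hs fun θ hθ => by rw [hgy _ (hmem t ht θ hθ)]
    rw [h2] at h1
    have hm2 : MemLp (fun θ => ‖g (t + θ)‖) 2 (μ.restrict (Set.Icc (-r) 0)) := by
      refine MemLp.of_bound
        ((hgc.comp (continuous_const.add continuous_id)).norm.aestronglyMeasurable) C ?_
      filter_upwards [ae_restrict_mem hs] with θ hθ
      simpa [Real.norm_of_nonneg (norm_nonneg _)] using hC _ (hmem t ht θ hθ)
    have hcs := cs_aux (fun θ => norm_nonneg (g (t + θ))) hm2
    rw [Measure.restrict_apply_univ] at hcs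
    calc ‖F (fun θ => y (t + θ))‖ ^ 2
        ≤ (∫ θ in Set.Icc (-r) 0, ‖g (t + θ)‖ ∂μ) ^ 2 := pow_le_pow_left₀ (norm_nonneg _) h1 2
      _ ≤ c * ∫ θ in Set.Icc (-r) 0, ‖g (t + θ)‖ ^ 2 ∂μ := hcs
  -- product integrability (for Fubini)
  haveI hfin1 : IsFiniteMeasure (volume.restrict (Set.Icc (0:ℝ) T)) := by
    constructor
    rw [Measure.restrict_apply_univ]
    simp [Real.volume_Icc]
  have hf2c : Continuous (fun p : ℝ × ℝ => ‖g (p.1 + p.2)‖ ^ 2) :=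
    ((hgc.comp (continuous_fst.add continuous_snd)).norm).pow 2
  have hprod : Integrable (fun p : ℝ × ℝ => ‖g (p.1 + p.2)‖ ^ 2)
      ((volume.restrict (Set.Icc (0:ℝ) T)).prod (μ.restrict (Set.Icc (-r) 0))) := by
    refine (integrable_const (C ^ 2)).mono' hf2c.aestronglyMeasurable ?_
    rw [Measure.prod_restrict]
    filter_upwards [ae_restrict_mem (measurableSet_Icc.prod hs)] with p hp
    have hp' := hmem p.1 hp.1 p.2 hp.2
    have : ‖g (p.1 + p.2)‖ ^ 2 ≤ C ^ 2 := pow_le_pow_left₀ (norm_nonneg _) (hC _ hp') 2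
    simpa [Real.norm_of_nonneg (by positivity : (0:ℝ) ≤ ‖g (p.1 + p.2)‖ ^ 2)] using this
  -- inner integral bound after translation
  have hinner : ∀ θ ∈ Set.Icc (-r) (0:ℝ),
      (∫ t in Set.Icc (0:ℝ) T, ‖g (t + θ)‖ ^ 2) ≤ K := by
    intro θ hθ
    have e1 : (∫ t in Set.Icc (0:ℝ) T, ‖g (t + θ)‖ ^ 2)
        = ∫ t in Set.Ioc θ (T + θ), ‖g t‖ ^ 2 := by
      rw [integral_Icc_eq_integral_Ioc, ← intervalIntegral.integral_of_le hT,
        intervalIntegral.integral_comp_add_right (fun x => ‖g x‖ ^ 2) θ, zero_add,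
        intervalIntegral.integral_of_le (by linarith : θ ≤ T + θ)]
    rw [e1]
    refine setIntegral_mono_set hgK (Filter.Eventually.of_forall fun x => by positivity) ?_
    refine HasSubset.Subset.eventuallyLE fun x hx => ?_
    exact ⟨by linarith [hx.1, hθ.1], by linarith [hx.2, hθ.2]⟩
  by_cases hLI : IntegrableOn (fun t => ‖F (fun θ => y (t + θ))‖ ^ 2) (Set.Icc (0:ℝ) T)
  · have hGint : IntegrableOn
        (fun t => c * ∫ θ in Set.Icc (-r) 0, ‖g (t + θ)‖ ^ 2 ∂μ) (Set.Icc (0:ℝ) T) :=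
      (hprod.integral_prod_left).const_mul c
    have step1 := setIntegral_mono_on hLI hGint measurableSet_Icc hpt
    have hsw : ∫ t in Set.Icc (0:ℝ) T, ∫ θ in Set.Icc (-r) 0, ‖g (t + θ)‖ ^ 2 ∂μ
        = ∫ θ in Set.Icc (-r) 0, (∫ t in Set.Icc (0:ℝ) T, ‖g (t + θ)‖ ^ 2) ∂μ :=
      integral_integral_swap hprod
    have hO : ∫ θ in Set.Icc (-r) 0, (∫ t in Set.Icc (0:ℝ) T, ‖g (t + θ)‖ ^ 2) ∂μ
        ≤ ∫ θ in Set.Icc (-r) 0, K ∂μ :=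
      setIntegral_mono_on (hprod.integral_prod_right)
        ((integrableOn_const_iff).mpr (Or.inr (measure_lt_top μ _))) hs hinner
    rw [setIntegral_const, smul_eq_mul] at hO
    have step2 : ∫ t in Set.Icc (0:ℝ) T,
        (c * ∫ θ in Set.Icc (-r) 0, ‖g (t + θ)‖ ^ 2 ∂μ) ≤ c ^ 2 * K := by
      rw [integral_const_mul, hsw]
      calc c * ∫ θ in Set.Icc (-r) 0, (∫ t in Set.Icc (0:ℝ) T, ‖g (t + θ)‖ ^ 2) ∂μ
          ≤ c * (c * K) := mul_le_mul_of_nonneg_left hO hc0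
        _ = c ^ 2 * K := by ring
    have hKy : K = ∫ t in Set.Icc (-r) T, ‖y t‖ ^ 2 :=
      setIntegral_congr_fun measurableSet_Icc fun x hx => by rw [hgy x hx]
    rw [← hKy]
    exact le_trans step1 step2
  · rw [integral_undef hLI]
    have h1 : 0 ≤ ∫ t in Set.Icc (-r) T, ‖y t‖ ^ 2 :=
      setIntegral_nonneg measurableSet_Icc fun x _ => by positivity
    positivity
end

section
/- Let r > 0 and β ∈ L¹([-r,0];ℝ) with ∫_{-r}^0 |β(θ)| dθ < 1. Define n(λ) = 1 + ∫_{-r}^0 β(θ) e^{λθ} dθ for λ ∈ ℂ. Then there exists μ > 0 such that every λ ∈ ℂ with n(λ) = 0 satisfies Re λ ≤ -μ. -/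
open MeasureTheory

/-- zeros of the distributed-delay characteristic kernel stay
uniformly in the open left half-plane when `‖β‖_{L¹} < 1`. -/
theorem stmt2 (r : ℝ) (hr : 0 < r) (β : ℝ → ℝ)
    (hβ : IntegrableOn β (Set.Icc (-r) 0))
    (hβ1 : (∫ θ in Set.Icc (-r) 0, |β θ|) < 1) :
    ∃ μ > (0:ℝ), ∀ lam : ℂ,
      (1 + ∫ θ in Set.Icc (-r) 0, (β θ : ℂ) * Complex.exp (lam * (θ : ℂ))) = 0 →
      lam.re ≤ -μ := by
  set I := ∫ θ in Set.Icc (-r) 0, |β θ| with hIdef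
  have hI0 : 0 ≤ I := by
    apply setIntegral_nonneg measurableSet_Icc
    intro θ _; exact abs_nonneg _
  set c : ℝ := max I (1/2) with hcdef
  have hc0 : (0:ℝ) < c := lt_max_of_lt_right (by norm_num)
  have hc1 : c < 1 := max_lt hβ1 (by norm_num)
  have hlog : Real.log c < 0 := Real.log_neg hc0 hc1
  set μ : ℝ := (-Real.log c) / (2*r) with hμdef
  have hμ0 : 0 < μ := div_pos (by linarith) (by linarith)
  refine ⟨μ, hμ0, ?_⟩
  intro lam hlam
  by_contra hre
  push_neg at hre
  have hβℂ : IntegrableOn (fun θ => (β θ : ℂ)) (Set.Icc (-r) 0) := hβ.ofReal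
  have hbound : ∀ θ ∈ Set.Icc (-r) 0, ‖Complex.exp (lam * (θ:ℂ))‖ ≤ Real.exp (μ * r) := by
    intro θ hθ
    rw [Complex.norm_exp]
    apply Real.exp_le_exp.mpr
    have h1 : (lam * (θ:ℂ)).re = lam.re * θ := by simp [Complex.mul_re]
    rw [h1]
    obtain ⟨h2, h3⟩ := hθ
    nlinarith [hre, hμ0.le]
  have hint : IntegrableOn (fun θ => (β θ : ℂ) * Complex.exp (lam * (θ:ℂ))) (Set.Icc (-r) 0) := by
    have := Integrable.bdd_mul (c := Real.exp (μ * r)) hβℂ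
      ((Complex.continuous_exp.comp (continuous_const.mul Complex.continuous_ofReal)).aestronglyMeasurable)
      ((ae_restrict_iff' measurableSet_Icc).mpr (ae_of_all _ hbound))
    exact this.congr (ae_of_all _ (fun θ => mul_comm _ _))
  have hnorm : ‖∫ θ in Set.Icc (-r) 0, (β θ:ℂ) * Complex.exp (lam*(θ:ℂ))‖
      ≤ I * Real.exp (μ*r) := by
    calc ‖∫ θ in Set.Icc (-r) 0, (β θ:ℂ) * Complex.exp (lam*(θ:ℂ))‖
        ≤ ∫ θ in Set.Icc (-r) 0, ‖(β θ:ℂ) * Complex.exp (lam*(θ:ℂ))‖ :=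
          norm_integral_le_integral_norm _
      _ ≤ ∫ θ in Set.Icc (-r) 0, |β θ| * Real.exp (μ*r) := by
          apply setIntegral_mono_on hint.norm (hβ.abs.mul_const _) measurableSet_Icc
          intro θ hθ
          rw [norm_mul, Complex.norm_real, Real.norm_eq_abs]
          exact mul_le_mul_of_nonneg_left (hbound θ hθ) (abs_nonneg _)
      _ = I * Real.exp (μ*r) := by rw [integral_mul_const]
  have hμr : μ * r = -Real.log c / 2 := by
    rw [hμdef]; field_simp
  have hlt : I * Real.exp (μ*r) < 1 := by
    have hIc : I ≤ c := le_max_left _ _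
    calc I * Real.exp (μ*r) ≤ c * Real.exp (μ*r) := by
          exact mul_le_mul_of_nonneg_right hIc (Real.exp_pos _).le
      _ = Real.exp (Real.log c + μ*r) := by rw [Real.exp_add, Real.exp_log hc0]
      _ < 1 := by
          rw [← Real.exp_zero]
          exact Real.exp_lt_exp.mpr (by rw [hμr]; linarith)
  have heq : (∫ θ in Set.Icc (-r) 0, (β θ:ℂ) * Complex.exp (lam*(θ:ℂ))) = -1 :=
    eq_neg_of_add_eq_zero_right hlam
  rw [heq] at hnorm
  simp at hnorm
  linarith
end

section
/- Let r > 0, c₀ > 0, and β ∈ L¹([-r,0];ℝ) with ∫_{-r}^0 |β(θ)| dθ < 1. Define n(λ) = 1 + ∫_{-r}^0 β(θ) e^{λθ} dθ. Then there exists μ > 0 such that: for every λ ∈ ℂ with n(λ) ≠ 0 and λ / n(λ) ∈ (-∞, -c₀] (i.e., λ/n(λ) is real and ≤ -c₀), one has Re λ ≤ -μ. -/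
open MeasureTheory

/-- the `Γ₁` part — characteristic values `lam` with
`lam / n(lam)` real and `≤ -c₀` have uniformly negative real part. -/
theorem stmt3 (r c₀ : ℝ) (hr : 0 < r) (hc₀ : 0 < c₀) (β : ℝ → ℝ)
    (hβ : IntegrableOn β (Set.Icc (-r) 0))
    (hβ1 : (∫ θ in Set.Icc (-r) 0, |β θ|) < 1) :
    ∃ μ > (0:ℝ), ∀ lam : ℂ,
      (1 + ∫ θ in Set.Icc (-r) 0, (β θ : ℂ) * Complex.exp (lam * (θ : ℂ))) ≠ 0 →
      (∃ γ : ℝ, γ ≤ -c₀ ∧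
        lam / (1 + ∫ θ in Set.Icc (-r) 0, (β θ : ℂ) * Complex.exp (lam * (θ : ℂ)))
          = (γ : ℂ)) →
      lam.re ≤ -μ := by
  set B : ℝ := ∫ θ in Set.Icc (-r) 0, |β θ| with hBdef
  have hB0 : 0 ≤ B := integral_nonneg fun θ => abs_nonneg _
  set t : ℝ := (1 + B) / 2 with htdef
  have ht1 : t < 1 := by simp only [htdef]; linarith
  have htB : B < t := by simp only [htdef]; linarith
  have ht0 : 0 < t := by simp only [htdef]; linarith
  set m : ℝ := max B (t / 2) with hmdef
  have hm0 : 0 < m := lt_of_lt_of_le (by linarith) (le_max_right _ _)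
  have hmt : m < t := max_lt htB (by linarith)
  have hBm : B ≤ m := le_max_left _ _
  set a : ℝ := Real.log (t / m) / r with hadef
  have ha0 : 0 < a := by
    apply div_pos _ hr
    apply Real.log_pos
    rw [lt_div_iff₀ hm0]; linarith
  have hear : Real.exp (a * r) = t / m := by
    rw [hadef, div_mul_cancel₀ _ (ne_of_gt hr), Real.exp_log (div_pos ht0 hm0)]
  have hearB : Real.exp (a * r) * B ≤ t := by
    rw [hear, div_mul_eq_mul_div, div_le_iff₀ hm0]
    nlinarith
  -- integrability of the integrand
  have hint : ∀ lam : ℂ,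
      IntegrableOn (fun θ : ℝ => (β θ : ℂ) * Complex.exp (lam * (θ : ℂ)))
        (Set.Icc (-r) 0) := by
    intro lam
    have hmeas : AEStronglyMeasurable (fun θ : ℝ => Complex.exp (lam * (θ : ℂ)))
        (volume.restrict (Set.Icc (-r) (0:ℝ))) :=
      (Complex.continuous_exp.comp (continuous_const.mul Complex.continuous_ofReal)).aestronglyMeasurable
    have hbound : ∀ᵐ θ : ℝ ∂(volume.restrict (Set.Icc (-r) (0:ℝ))),
        ‖Complex.exp (lam * (θ : ℂ))‖ ≤ Real.exp (|lam.re| * r) := by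
      filter_upwards [ae_restrict_mem measurableSet_Icc] with θ hθ
      rw [Complex.norm_exp]
      apply Real.exp_le_exp.2
      have h1 : (lam * (θ : ℂ)).re = lam.re * θ := by
        simp [Complex.mul_re]
      rw [h1]
      have habs : |θ| ≤ r := abs_le.2 ⟨hθ.1, le_trans hθ.2 hr.le⟩
      calc lam.re * θ ≤ |lam.re * θ| := le_abs_self _
        _ = |lam.re| * |θ| := abs_mul _ _
        _ ≤ |lam.re| * r := mul_le_mul_of_nonneg_left habs (abs_nonneg _)
    have h := Integrable.bdd_mul (c := Real.exp (|lam.re| * r))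
      (hβ.ofReal (𝕜 := ℂ)) hmeas hbound
    exact h.congr (Filter.Eventually.of_forall fun θ => mul_comm _ _)
  refine ⟨min a (c₀ * (1 - t)), lt_min ha0 (by nlinarith), ?_⟩
  intro lam hn ⟨γ, hγ, hdiv⟩
  by_contra hcon
  push_neg at hcon
  have hre : -a ≤ lam.re := by
    have := min_le_left a (c₀ * (1 - t))
    linarith
  -- bound on real part of the integral
  set I : ℂ := ∫ θ in Set.Icc (-r) 0, (β θ : ℂ) * Complex.exp (lam * (θ : ℂ)) with hIdef
  have hIre : I.re = ∫ θ in Set.Icc (-r) 0, (β θ * (Complex.exp (lam * (θ : ℂ))).re) := by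
    have h := integral_re (μ := volume.restrict (Set.Icc (-r) (0:ℝ))) (hint lam)
    simp only [RCLike.re_to_complex] at h
    rw [hIdef, ← h]
    congr 1
    ext θ
    simp [Complex.mul_re]
  have hIint : Integrable (fun θ => β θ * (Complex.exp (lam * (θ : ℂ))).re)
      (volume.restrict (Set.Icc (-r) 0)) := by
    have := (hint lam).re
    refine this.congr (Filter.Eventually.of_forall fun θ => ?_)
    simp [Complex.mul_re]
  have hkey : |I.re| ≤ t := by
    rw [hIre]
    calc |∫ θ in Set.Icc (-r) 0, (β θ * (Complex.exp (lam * (θ : ℂ))).re)|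
        ≤ ∫ θ in Set.Icc (-r) 0, |β θ| * |(Complex.exp (lam * (θ : ℂ))).re| := by
          simpa [Real.norm_eq_abs, abs_mul] using
            norm_integral_le_integral_norm (μ := volume.restrict (Set.Icc (-r) (0:ℝ)))
              (fun θ => β θ * (Complex.exp (lam * (θ : ℂ))).re)
      _ ≤ ∫ θ in Set.Icc (-r) 0, |β θ| * Real.exp (a * r) := by
          have hIint' : Integrable (fun θ => |β θ| * |(Complex.exp (lam * (θ : ℂ))).re|)
              (volume.restrict (Set.Icc (-r) 0)) := by
            simpa [abs_mul] using hIint.abs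
          apply setIntegral_mono_on hIint' (hβ.abs.mul_const _) measurableSet_Icc
          intro θ hθ
          apply mul_le_mul_of_nonneg_left _ (abs_nonneg _)
          have h1 : |(Complex.exp (lam * (θ : ℂ))).re| ≤ ‖Complex.exp (lam * (θ : ℂ))‖ :=
            Complex.abs_re_le_norm _
          rw [Complex.norm_exp] at h1
          have h2 : (lam * (θ : ℂ)).re = lam.re * θ := by simp [Complex.mul_re]
          rw [h2] at h1
          refine h1.trans (Real.exp_le_exp.2 ?_)
          nlinarith [hθ.1, hθ.2]
      _ = B * Real.exp (a * r) := by
          rw [hBdef, ← integral_mul_const]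
      _ ≤ t := by rw [mul_comm]; exact hearB
  -- algebra
  have hlam : lam = (γ : ℂ) * (1 + I) := by
    rw [div_eq_iff hn] at hdiv
    exact hdiv
  have hlamre : lam.re = γ * (1 + I.re) := by
    rw [hlam]
    simp [Complex.mul_re, Complex.add_re]
  have h1t : 1 - t ≤ 1 + I.re := by
    have := abs_le.1 hkey
    linarith [this.1]
  have : lam.re ≤ -(c₀ * (1 - t)) := by
    rw [hlamre]
    nlinarith
  have := min_le_right a (c₀ * (1 - t))
  linarith
end

section
/- Let r > 0 and α ∈ ℝ with |α| < 1, and n(λ) = 1 + α e^{-λr}. Then for every λ ∈ ℂ with Re λ > 0, the quotient z = λ / n(λ) satisfies |arg z| < π/2 + θ, where θ = arctan(|α|/(1-|α|)) < π/2. In particular, if Σ = {z : |arg z| < π/2 + θ}, then z ∈ Σ and hence z stays at positive distance from any closed set contained in (-∞, -c₀] with c₀ > 0. -/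
/-- the quotient `lam / n(lam)` lies in the sector
`|arg z| < π/2 + θ` with `θ = arctan (|α|/(1-|α|)) < π/2`; in particular it
avoids the half-line `(-∞, -c₀]` for every `c₀ > 0`. -/
theorem stmt10 (r α : ℝ) (hr : 0 < r) (hα : |α| < 1) (lam : ℂ)
    (hlam : 0 < lam.re) :
    Real.arctan (|α| / (1 - |α|)) < Real.pi / 2 ∧
    |Complex.arg (lam / (1 + (α : ℂ) * Complex.exp (-(lam * (r : ℂ)))))| <
      Real.pi / 2 + Real.arctan (|α| / (1 - |α|)) ∧
    (∀ c₀ : ℝ, 0 < c₀ →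
      lam / (1 + (α : ℂ) * Complex.exp (-(lam * (r : ℂ)))) ∉
        {z : ℂ | z.im = 0 ∧ z.re ≤ -c₀}) := by
  set a : ℝ := |α| with ha
  have ha0 : 0 ≤ a := abs_nonneg α
  have ha1 : 0 < 1 - a := by linarith
  set θ : ℝ := Real.arctan (a / (1 - a)) with hθdef
  have hθlt : θ < Real.pi / 2 := Real.arctan_lt_pi_div_two _
  have hθ0 : 0 ≤ θ := by
    rw [hθdef, ← Real.arctan_zero]
    exact Real.arctan_strictMono.monotone (by positivity)
  set w : ℂ := (α : ℂ) * Complex.exp (-(lam * (r : ℂ))) with hw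
  set n : ℂ := 1 + w with hn
  -- bound on |w|
  have habsw : ‖w‖ ≤ a := by
    rw [hw, norm_mul, Complex.norm_exp]
    have hre : (-(lam * (r : ℂ))).re = -(lam.re * r) := by simp
    rw [hre, Complex.norm_real, Real.norm_eq_abs]
    calc |α| * Real.exp (-(lam.re * r)) ≤ |α| * 1 :=
          mul_le_mul_of_nonneg_left
            (Real.exp_le_one_iff.2 (by nlinarith)) (abs_nonneg α)
      _ = a := by rw [mul_one]
  have hwre : |w.re| ≤ a := le_trans (Complex.abs_re_le_norm w) habsw
  have hwim : |w.im| ≤ a := le_trans (Complex.abs_im_le_norm w) habsw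
  have hnre : 1 - a ≤ n.re := by
    have : n.re = 1 + w.re := by simp [hn]
    rw [this]
    have := abs_le.1 hwre
    linarith [this.1]
  have hnre0 : 0 < n.re := lt_of_lt_of_le ha1 hnre
  have hnim : |n.im| ≤ a := by
    have : n.im = w.im := by simp [hn]
    rwa [this]
  have hn0 : n ≠ 0 := by
    intro h
    rw [h] at hnre0
    simp at hnre0
  have hlam0 : lam ≠ 0 := by
    intro h
    rw [h] at hlam
    simp at hlam
  -- |arg n| ≤ θ
  have hargn_lt : |Complex.arg n| < Real.pi / 2 :=
    Complex.abs_arg_lt_pi_div_two_iff.2 (Or.inl hnre0)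
  have hargn_eq : Complex.arg n = Real.arctan (n.im / n.re) := by
    have h1 := abs_lt.1 hargn_lt
    rw [← Complex.tan_arg, Real.arctan_tan h1.1 h1.2]
  have hratio : |n.im / n.re| ≤ a / (1 - a) := by
    rw [abs_div, abs_of_pos hnre0]
    exact div_le_div₀ ha0 hnim ha1 hnre
  have hargn : |Complex.arg n| ≤ θ := by
    rw [hargn_eq, abs_le]
    constructor
    · rw [← Real.arctan_neg]
      exact Real.arctan_strictMono.monotone (by linarith [abs_le.1 hratio])
    · exact Real.arctan_strictMono.monotone (le_trans (le_abs_self _) hratio)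
  have hargl : |Complex.arg lam| < Real.pi / 2 :=
    Complex.abs_arg_lt_pi_div_two_iff.2 (Or.inl hlam)
  -- arg of the quotient
  have hdiff : |Complex.arg lam - Complex.arg n| < Real.pi / 2 + θ :=
    calc |Complex.arg lam - Complex.arg n|
        ≤ |Complex.arg lam| + |Complex.arg n| := abs_sub _ _
      _ < Real.pi / 2 + θ := add_lt_add_of_lt_of_le hargl hargn
  have hpi : 0 < Real.pi := Real.pi_pos
  have hargdiv : Complex.arg (lam / n) = Complex.arg lam - Complex.arg n := by
    have hA : ((Complex.arg (lam / n) : ℝ) : Real.Angle) =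
        ((Complex.arg lam - Complex.arg n : ℝ) : Real.Angle) := by
      rw [Real.Angle.coe_sub]
      exact Complex.arg_div_coe_angle hlam0 hn0
    have h1 : Real.Angle.toReal ((Complex.arg (lam / n) : ℝ) : Real.Angle) =
        Complex.arg (lam / n) :=
      Real.Angle.toReal_coe_eq_self_iff_mem_Ioc.2 (Complex.arg_mem_Ioc _)
    have h2 : Real.Angle.toReal ((Complex.arg lam - Complex.arg n : ℝ) : Real.Angle) =
        Complex.arg lam - Complex.arg n := by
      apply Real.Angle.toReal_coe_eq_self_iff_mem_Ioc.2
      have := abs_lt.1 hdiff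
      constructor <;> [linarith; linarith]
    rw [← h1, hA, h2]
  have hmain : |Complex.arg (lam / n)| < Real.pi / 2 + θ := by
    rw [hargdiv]; exact hdiff
  refine ⟨hθlt, hmain, ?_⟩
  intro c₀ hc₀ hmem
  obtain ⟨him, hre⟩ := hmem
  have hargpi : Complex.arg (lam / n) = Real.pi :=
    Complex.arg_eq_pi_iff.2 ⟨lt_of_le_of_lt hre (by linarith), him⟩
  rw [hargpi] at hmain
  rw [abs_of_pos hpi] at hmain
  linarith
end
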